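/- A symmetric map ε : X×X∖diag → P(M) is a symmetrized Fitch map if and only if (1) for every m ∈ M the complementary neighborhoods N_m[ε] form a partition of X, and (2) the subsplit system S(ε) := { N|N' : N, N' ∈ N_m[ε] for some m ∈ M, N ∩ N' = ∅ } is compatible. -/

import Mathlib

open SimpleGraph

/-- A phylogenetic (unrooted) tree with leaf set `X`: a finite connected acyclic
simple graph in which the leaves of `X` are injectively embedded as vertices of
degree at most one, and all other (inner) vertices have degree at least three. -/
structure PhyloTree (X : Type) where
  V : Type
  [finV : Fintype V]
  T : SimpleGraph V
  conn : T.Connected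
  acyc : T.IsAcyclic
  leaf : X → V
  leaf_inj : Function.Injective leaf
  leaf_deg : ∀ x : X, (T.neighborSet (leaf x)).ncard ≤ 1
  inner_deg : ∀ v : V, v ∉ Set.range leaf → 3 ≤ (T.neighborSet v).ncard

/-- `(t, lab)` explains `ε`: for distinct leaves `x,y`, a color `m` belongs to
`ε x y` iff the (unique) path from `x` to `y` in `t` contains an `m`-edge. -/
def Explains {X M : Type} (t : PhyloTree X) (lab : Sym2 t.V → Set M)
    (ε : X → X → Set M) : Prop :=
  ∀ x y : X, x ≠ y → ∀ p : t.T.Walk (t.leaf x) (t.leaf y), p.IsPath →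
    ∀ m : M, m ∈ ε x y ↔ ∃ e ∈ p.edges, m ∈ lab e

/-- `ε` is a symmetrized Fitch map: some edge-labeled tree explains it. -/
def IsSymFitch {X M : Type} (ε : X → X → Set M) : Prop :=
  ∃ t : PhyloTree X, ∃ lab : Sym2 t.V → Set M, Explains t lab ε

/-- The tree `t` displays the subsplit `A|B`: some edge of `t` separates the
leaves in `A` from the leaves in `B`. -/
def Displays {X : Type} (t : PhyloTree X) (A B : Set X) : Prop :=
  ∃ u v : t.V, t.T.Adj u v ∧
    (∀ x ∈ A, (t.T.deleteEdges {s(u,v)}).Reachable (t.leaf x) u) ∧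
    (∀ x ∈ B, (t.T.deleteEdges {s(u,v)}).Reachable (t.leaf x) v)

/-- The complementary neighborhood `N_m[y]` of `y` w.r.t. color `m`. -/
def Nbr {X M : Type} (ε : X → X → Set M) (m : M) (y : X) : Set X :=
  {x | x = y ∨ m ∉ ε x y}

namespace FitchAux

variable {V : Type} {G : SimpleGraph V}

lemma reach_del_tri {u v a b : V} (p : G.Walk a b) :
    (G.deleteEdges {s(u,v)}).Reachable a b ∨ (G.deleteEdges {s(u,v)}).Reachable a u ∨
      (G.deleteEdges {s(u,v)}).Reachable a v := by
  induction p with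
  | nil => exact Or.inl (Reachable.refl _)
  | @cons a c b h q ih =>
    by_cases he : s(a, c) = s(u, v)
    · rw [Sym2.eq_iff] at he
      rcases he with ⟨rfl, rfl⟩ | ⟨rfl, rfl⟩
      · exact Or.inr (Or.inl (Reachable.refl _))
      · exact Or.inr (Or.inr (Reachable.refl _))
    · have hadj : (G.deleteEdges {s(u,v)}).Adj a c :=
        SimpleGraph.deleteEdges_adj.mpr ⟨h, by simpa using he⟩
      rcases ih with h' | h' | h'
      · exact Or.inl (hadj.reachable.trans h')
      · exact Or.inr (Or.inl (hadj.reachable.trans h'))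
      · exact Or.inr (Or.inr (hadj.reachable.trans h'))

lemma reach_del_total (hc : G.Connected) (u v a : V) :
    (G.deleteEdges {s(u,v)}).Reachable a u ∨ (G.deleteEdges {s(u,v)}).Reachable a v := by
  obtain ⟨p⟩ := hc a u
  rcases reach_del_tri (u := u) (v := v) p with h | h | h
  · exact Or.inl h
  · exact Or.inl h
  · exact Or.inr h

lemma not_reach_del_of_mem_edges (hac : G.IsAcyclic) {a b : V} {p : G.Walk a b}
    (hp : p.IsPath) {e : Sym2 V} (he : e ∈ p.edges) :
    ¬ (G.deleteEdges {e}).Reachable a b := by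
  classical
  rintro ⟨q⟩
  have hqb : (q.bypass).IsPath := SimpleGraph.Walk.bypass_isPath q
  have hsub : ∀ f ∈ q.bypass.edges, f ∈ G.edgeSet := fun f hf =>
    SimpleGraph.edgeSet_mono (SimpleGraph.deleteEdges_le _) (q.bypass.edges_subset_edgeSet hf)
  have hq' : (q.bypass.transfer G hsub).IsPath := hqb.transfer hsub
  have hpq : p = q.bypass.transfer G hsub := by
    have := hac.path_unique ⟨p, hp⟩ ⟨q.bypass.transfer G hsub, hq'⟩
    exact congrArg Subtype.val this
  rw [hpq] at he
  rw [SimpleGraph.Walk.edges_transfer] at he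
  have := q.bypass.edges_subset_edgeSet he
  rw [SimpleGraph.edgeSet_deleteEdges] at this
  exact this.2 rfl

lemma reach_del_of_not_mem_edges {a b : V} (p : G.Walk a b) {e : Sym2 V}
    (he : e ∉ p.edges) : (G.deleteEdges {e}).Reachable a b :=
  ⟨p.toDeleteEdges {e} (fun f hf => by
    simp only [Set.mem_singleton_iff]
    rintro rfl
    exact he hf)⟩

lemma orient (hc : G.Connected) (hac : G.IsAcyclic) {a b : V} {p : G.Walk a b}
    (hp : p.IsPath) {e : Sym2 V} (he : e ∈ p.edges) :
    ∃ u v : V, G.Adj u v ∧ e = s(u,v) ∧ (G.deleteEdges {e}).Reachable a u ∧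
      (G.deleteEdges {e}).Reachable b v := by
  induction e using Sym2.ind with
  | _ u v =>
    have huv : G.Adj u v := p.adj_of_mem_edges he
    have hna := not_reach_del_of_mem_edges hac hp he
    rcases reach_del_total hc u v a with ha | ha <;>
      rcases reach_del_total hc u v b with hb | hb
    · exact absurd (ha.trans hb.symm) hna
    · exact ⟨u, v, huv, rfl, ha, hb⟩
    · exact ⟨v, u, huv.symm, Sym2.eq_swap.symm, ha, hb⟩
    · exact absurd (ha.trans hb.symm) hna

lemma leaf_reach_eq {l w : V} (huniq : ∀ c : V, G.Adj l c → c = w)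
    {z : V} (h : (G.deleteEdges {s(l,w)}).Reachable l z) : z = l := by
  obtain ⟨p⟩ := h
  cases p with
  | nil => rfl
  | @cons _ c _ h' q =>
    obtain ⟨hadj, hne⟩ := SimpleGraph.deleteEdges_adj.mp h'
    exact absurd (by rw [huniq c hadj]; exact rfl) hne

lemma reach_of_mem_support {a b c : V} (p : G.Walk a b) (h : c ∈ p.support) :
    G.Reachable a c := by
  classical
  exact ⟨p.takeUntil c h⟩

lemma exists_first_edge {a b : V} (p : G.Walk a b) (hne : a ≠ b) :
    ∃ c : V, G.Adj a c ∧ s(a,c) ∈ p.edges := by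
  cases p with
  | nil => exact absurd rfl hne
  | @cons _ c _ h q =>
    exact ⟨c, h, by rw [SimpleGraph.Walk.edges_cons]; exact List.mem_cons_self⟩

lemma leaf_mem_support_endpoint {a b l : V} {p : G.Walk a b} (hp : p.IsPath)
    (huniq : ∀ c c' : V, G.Adj l c → G.Adj l c' → c = c') (h : l ∈ p.support) :
    l = a ∨ l = b := by
  classical
  by_contra hcon
  push_neg at hcon
  obtain ⟨hla, hlb⟩ := hcon
  obtain ⟨c1, hc1, he1⟩ := exists_first_edge (p.takeUntil l h).reverse (fun hh => hla hh)
  obtain ⟨c2, hc2, he2⟩ := exists_first_edge (p.dropUntil l h) (fun hh => hlb hh)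
  rw [SimpleGraph.Walk.edges_reverse, List.mem_reverse] at he1
  have hcc : c1 = c2 := huniq c1 c2 hc1 hc2
  subst hcc
  have hsplit : (p.takeUntil l h).edges ++ (p.dropUntil l h).edges = p.edges := by
    rw [← SimpleGraph.Walk.edges_append, SimpleGraph.Walk.take_spec]
  have hnd : p.edges.Nodup := hp.isTrail.edges_nodup
  rw [← hsplit] at hnd
  exact (List.disjoint_of_nodup_append hnd) he1 he2

end FitchAux

theorem fitch_iff_partition_and_compatible {X M : Type} [Fintype X]
    (hcard : 3 ≤ Fintype.card X)
    (ε : X → X → Set M) (hsym : ∀ x y : X, ε x y = ε y x) :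
    IsSymFitch ε ↔
      ((∀ m : M, Setoid.IsPartition (Set.range (Nbr ε m))) ∧
        ∃ t : PhyloTree X, ∀ m : M, ∀ y y' : X,
          Disjoint (Nbr ε m y) (Nbr ε m y') →
            Displays t (Nbr ε m y) (Nbr ε m y')) := by
  classical
  constructor
  · rintro ⟨t, lab, hexp⟩
    letI : Fintype t.V := t.finV
    have hpath : ∀ a b : t.V, ∃ p : t.T.Walk a b, p.IsPath := fun a b =>
      ⟨(t.conn a b).some.bypass, SimpleGraph.Walk.bypass_isPath _⟩
    have hsym' : ∀ (m : M) (a b : X), m ∉ ε a b → m ∉ ε b a := fun m a b h => by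
      rw [hsym b a]; exact h
    have htrans : ∀ (m : M) (a b c : X), a ≠ b → b ≠ c → a ≠ c →
        m ∉ ε a b → m ∉ ε b c → m ∉ ε a c := by
      intro m a b c hab hbc hac h1 h2 hin
      obtain ⟨p1, hp1⟩ := hpath (t.leaf a) (t.leaf b)
      obtain ⟨p2, hp2⟩ := hpath (t.leaf b) (t.leaf c)
      obtain ⟨e, he, hme⟩ := (hexp a c hac ((p1.append p2).bypass)
        (SimpleGraph.Walk.bypass_isPath _) m).1 hin
      have hsubs := (p1.append p2).edges_bypass_subset he
      rw [SimpleGraph.Walk.edges_append, List.mem_append] at hsubs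
      rcases hsubs with h | h
      · exact h1 ((hexp a b hab p1 hp1 m).2 ⟨e, h, hme⟩)
      · exact h2 ((hexp b c hbc p2 hp2 m).2 ⟨e, h, hme⟩)
    have hrel : ∀ (m : M) (a b c : X), (a = b ∨ m ∉ ε a b) → (b = c ∨ m ∉ ε b c) →
        (a = c ∨ m ∉ ε a c) := by
      intro m a b c h1 h2
      rcases h1 with rfl | h1
      · exact h2
      rcases h2 with rfl | h2
      · exact Or.inr h1
      by_cases hac : a = c
      · exact Or.inl hac
      by_cases hab : a = b
      · subst hab; exact Or.inr h2
      by_cases hbc : b = c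
      · subst hbc; exact Or.inr h1
      · exact Or.inr (htrans m a b c hab hbc hac h1 h2)
    have hrsym : ∀ (m : M) (a b : X), (a = b ∨ m ∉ ε a b) → (b = a ∨ m ∉ ε b a) := by
      intro m a b h
      rcases h with rfl | h
      · exact Or.inl rfl
      · exact Or.inr (by rw [hsym b a]; exact h)
    refine ⟨fun m => ⟨?_, ?_⟩, ?_⟩
    · rintro ⟨y, hy⟩
      have hyy : y ∈ Nbr ε m y := Or.inl rfl
      rw [hy] at hyy
      exact hyy
    · intro a
      refine ⟨Nbr ε m a, ⟨⟨a, rfl⟩, Or.inl rfl⟩, ?_⟩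
      rintro S ⟨⟨y, rfl⟩, haS⟩
      have haS' : a = y ∨ m ∉ ε a y := haS
      ext z
      simp only [Nbr, Set.mem_setOf_eq]
      constructor
      · intro hz
        exact hrel m z y a hz (hrsym m a y haS')
      · intro hz
        exact hrel m z a y hz haS'
    · refine ⟨t, ?_⟩
      intro m y y' hdisj
      have hne : y ≠ y' := by
        rintro rfl
        exact Set.disjoint_left.mp hdisj (Or.inl rfl) (Or.inl rfl)
      have hyy' : m ∈ ε y y' := by
        by_contra h
        exact Set.disjoint_left.mp hdisj
          (show y' ∈ Nbr ε m y from Or.inr (hsym' m y y' h)) (Or.inl rfl)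
      obtain ⟨p, hp⟩ := hpath (t.leaf y) (t.leaf y')
      obtain ⟨e, he, hme⟩ := (hexp y y' hne p hp m).1 hyy'
      obtain ⟨u, v, huv, rfl, hyu, hy'v⟩ := FitchAux.orient t.conn t.acyc hp he
      refine ⟨u, v, huv, ?_, ?_⟩
      · intro x hx
        by_cases hxy : x = y
        · subst hxy; exact hyu
        · rcases hx with rfl | hx
          · exact hyu
          · obtain ⟨q, hq⟩ := hpath (t.leaf x) (t.leaf y)
            have heq : s(u,v) ∉ q.edges := fun hh =>
              hx ((hexp x y hxy q hq m).2 ⟨_, hh, hme⟩)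
            exact (FitchAux.reach_del_of_not_mem_edges q heq).trans hyu
      · intro x hx
        by_cases hxy : x = y'
        · subst hxy; exact hy'v
        · rcases hx with rfl | hx
          · exact hy'v
          · obtain ⟨q, hq⟩ := hpath (t.leaf x) (t.leaf y')
            have heq : s(u,v) ∉ q.edges := fun hh =>
              hx ((hexp x y' hxy q hq m).2 ⟨_, hh, hme⟩)
            exact (FitchAux.reach_del_of_not_mem_edges q heq).trans hy'v
  · rintro ⟨hpart, t, hdisp⟩
    letI : Fintype t.V := t.finV
    have hpath : ∀ a b : t.V, ∃ p : t.T.Walk a b, p.IsPath := fun a b =>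
      ⟨(t.conn a b).some.bypass, SimpleGraph.Walk.bypass_isPath _⟩
    have hsym' : ∀ (m : M) (a b : X), m ∉ ε a b → m ∉ ε b a := fun m a b h => by
      rw [hsym b a]; exact h
    have hNbr_eq : ∀ (m : M) (a b : X), a ∈ Nbr ε m b → Nbr ε m b = Nbr ε m a := by
      intro m a b hab
      obtain ⟨S, hS, huniq⟩ := (hpart m).2 a
      have h1 := huniq (Nbr ε m b) ⟨⟨b, rfl⟩, hab⟩
      have h2 := huniq (Nbr ε m a) ⟨⟨a, rfl⟩, Or.inl rfl⟩
      rw [h1, h2]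
    have huniqnbr : ∀ (x : X) (c c' : t.V), t.T.Adj (t.leaf x) c → t.T.Adj (t.leaf x) c' →
        c = c' := by
      intro x c c' h1 h2
      exact (Set.ncard_le_one_iff (Set.toFinite _)).mp (t.leaf_deg x)
        ((t.T.mem_neighborSet _ _).mpr h1) ((t.T.mem_neighborSet _ _).mpr h2)
    have hdisj' : ∀ (m : M) (z z' : X), z' ∉ Nbr ε m z →
        Disjoint (Nbr ε m z) (Nbr ε m z') := by
      intro m z z' hzz'
      rw [Set.disjoint_left]
      intro a ha ha'
      apply hzz'
      have : Nbr ε m z = Nbr ε m z' := (hNbr_eq m a z ha).trans (hNbr_eq m a z' ha').symm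
      rw [this]
      exact Or.inl rfl
    refine ⟨t, fun e => {m | ∀ z w : X, m ∉ ε z w →
      (t.T.deleteEdges {e}).Reachable (t.leaf z) (t.leaf w)}, ?_⟩
    intro x y hxy p hp m
    constructor
    · intro hm
      by_contra hno
      push_neg at hno
      have hcross : ∀ e ∈ p.edges, ∃ z w : X, m ∉ ε z w ∧
          ¬(t.T.deleteEdges {e}).Reachable (t.leaf z) (t.leaf w) := by
        intro e he
        have h := hno e he
        simp only [Set.mem_setOf_eq] at h
        push_neg at h
        exact h
      have hK : ∀ (z w z' w' : X), m ∉ ε z w → m ∉ ε z' w' →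
          ∀ (Q : t.T.Walk (t.leaf z) (t.leaf w)) (Q' : t.T.Walk (t.leaf z') (t.leaf w')),
          Q.IsPath → Q'.IsPath → ∀ c : t.V, c ∈ Q.support → c ∈ Q'.support →
          z' ∈ Nbr ε m z := by
        intro z w z' w' hzw hzw' Q Q' hQ hQ' c hcQ hcQ'
        by_contra hzz'
        obtain ⟨α, β, hαβ, hα, hβ⟩ := hdisp m z z' (hdisj' m z z' hzz')
        have hbr : ¬ (t.T.deleteEdges {s(α,β)}).Reachable α β :=
          (SimpleGraph.isBridge_iff.mp
            (SimpleGraph.isAcyclic_iff_forall_adj_isBridge.mp t.acyc hαβ))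
        have hwz : w ∈ Nbr ε m z := Or.inr (hsym' m z w hzw)
        have hwz' : w' ∈ Nbr ε m z' := Or.inr (hsym' m z' w' hzw')
        have hQg : s(α,β) ∉ Q.edges := by
          intro hg
          exact FitchAux.not_reach_del_of_mem_edges t.acyc hQ hg
            ((hα z (Or.inl rfl)).trans (hα w hwz).symm)
        have hQ'g : s(α,β) ∉ Q'.edges := by
          intro hg
          exact FitchAux.not_reach_del_of_mem_edges t.acyc hQ' hg
            ((hβ z' (Or.inl rfl)).trans (hβ w' hwz').symm)
        have hQsub : ∀ f ∈ Q.edges, f ∈ (t.T.deleteEdges {s(α,β)}).edgeSet := by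
          intro f hf
          rw [SimpleGraph.edgeSet_deleteEdges]
          refine ⟨Q.edges_subset_edgeSet hf, ?_⟩
          simp only [Set.mem_singleton_iff]
          rintro rfl
          exact hQg hf
        have hQ'sub : ∀ f ∈ Q'.edges, f ∈ (t.T.deleteEdges {s(α,β)}).edgeSet := by
          intro f hf
          rw [SimpleGraph.edgeSet_deleteEdges]
          refine ⟨Q'.edges_subset_edgeSet hf, ?_⟩
          simp only [Set.mem_singleton_iff]
          rintro rfl
          exact hQ'g hf
        have h1 : (t.T.deleteEdges {s(α,β)}).Reachable (t.leaf z) c :=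
          FitchAux.reach_of_mem_support (Q.transfer _ hQsub)
            (by rwa [SimpleGraph.Walk.support_transfer])
        have h2 : (t.T.deleteEdges {s(α,β)}).Reachable (t.leaf z') c :=
          FitchAux.reach_of_mem_support (Q'.transfer _ hQ'sub)
            (by rwa [SimpleGraph.Walk.support_transfer])
        exact hbr ((h1.symm.trans (hα z (Or.inl rfl))).symm.trans
          (h2.symm.trans (hβ z' (Or.inl rfl))))
      have hchain : ∀ (a b : t.V) (q : t.T.Walk a b), (∀ e ∈ q.edges, ∃ z w : X, m ∉ ε z w ∧
          ¬(t.T.deleteEdges {e}).Reachable (t.leaf z) (t.leaf w)) →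
          ∀ z : X,
          (∃ z' w' : X, z' ∈ Nbr ε m z ∧ m ∉ ε z' w' ∧
            ∃ Q : t.T.Walk (t.leaf z') (t.leaf w'), Q.IsPath ∧ a ∈ Q.support) →
          (∃ z' w' : X, z' ∈ Nbr ε m z ∧ m ∉ ε z' w' ∧
            ∃ Q : t.T.Walk (t.leaf z') (t.leaf w'), Q.IsPath ∧ b ∈ Q.support) := by
        intro a b q
        induction q with
        | nil => intro _ z h; exact h
        | @cons a c b hadj q ih =>
          intro hcr z hH
          obtain ⟨z1, w1, hz1, hz1w1, Q1, hQ1, haQ1⟩ := hH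
          obtain ⟨z2, w2, hz2w2, hnr⟩ := hcr s(a,c)
            (by rw [SimpleGraph.Walk.edges_cons]; exact List.mem_cons_self)
          obtain ⟨Q2, hQ2⟩ := hpath (t.leaf z2) (t.leaf w2)
          have heQ2 : s(a,c) ∈ Q2.edges := by
            by_contra hee
            exact hnr (FitchAux.reach_del_of_not_mem_edges Q2 hee)
          have haQ2 : a ∈ Q2.support := SimpleGraph.Walk.fst_mem_support_of_mem_edges Q2 heQ2
          have hcQ2 : c ∈ Q2.support := SimpleGraph.Walk.snd_mem_support_of_mem_edges Q2 heQ2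
          have hz2z1 : z2 ∈ Nbr ε m z1 :=
            hK z1 w1 z2 w2 hz1w1 hz2w2 Q1 Q2 hQ1 hQ2 a haQ1 haQ2
          have hz2z : z2 ∈ Nbr ε m z := by
            rw [hNbr_eq m z1 z hz1]
            exact hz2z1
          exact ih (fun e he => hcr e
              (by rw [SimpleGraph.Walk.edges_cons]; exact List.mem_cons_of_mem _ he)) z
            ⟨z2, w2, hz2z, hz2w2, Q2, hQ2, hcQ2⟩
      have hlne : t.leaf x ≠ t.leaf y := fun h => hxy (t.leaf_inj h)
      obtain ⟨c, hadjc, hec⟩ := FitchAux.exists_first_edge p hlne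
      obtain ⟨z, w, hzw, hnr⟩ := hcross s(t.leaf x, c) hec
      obtain ⟨Q, hQ⟩ := hpath (t.leaf z) (t.leaf w)
      have heQ : s(t.leaf x, c) ∈ Q.edges := by
        by_contra hee
        exact hnr (FitchAux.reach_del_of_not_mem_edges Q hee)
      have hLx : ∀ v' : t.V, (t.T.deleteEdges {s(t.leaf x, c)}).Reachable (t.leaf x) v' →
          v' = t.leaf x :=
        fun v' hv' => FitchAux.leaf_reach_eq (fun d hd => huniqnbr x d c hd hadjc) hv'
      have hor : z = x ∨ w = x := by
        rcases FitchAux.reach_del_total t.conn (t.leaf x) c (t.leaf z) with h1 | h1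
        · exact Or.inl (t.leaf_inj (hLx _ h1.symm))
        rcases FitchAux.reach_del_total t.conn (t.leaf x) c (t.leaf w) with h2 | h2
        · exact Or.inr (t.leaf_inj (hLx _ h2.symm))
        · exact absurd (h1.trans h2.symm) hnr
      have hHx : ∃ z' w' : X, z' ∈ Nbr ε m x ∧ m ∉ ε z' w' ∧
          ∃ Q' : t.T.Walk (t.leaf z') (t.leaf w'), Q'.IsPath ∧ t.leaf x ∈ Q'.support := by
        rcases hor with h | h
        · refine ⟨z, w, Or.inl h, hzw, Q, hQ, ?_⟩
          rw [← h]
          exact Q.start_mem_support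
        · refine ⟨x, z, Or.inl rfl, hsym' m z x (h ▸ hzw), (Q.reverse.copy (by rw [h]) rfl),
            ?_, ?_⟩
          · rw [SimpleGraph.Walk.isPath_copy]
            exact hQ.reverse
          · rw [SimpleGraph.Walk.support_copy, ← h]
            exact SimpleGraph.Walk.start_mem_support _
      obtain ⟨z', w', hz'm, hz'w', Q', hQ', hysup⟩ :=
        hchain (t.leaf x) (t.leaf y) p hcross x hHx
      have hyend := FitchAux.leaf_mem_support_endpoint hQ'
        (fun c1 c2 p1 p2 => huniqnbr y c1 c2 p1 p2) hysup
      have hyNx : y ∈ Nbr ε m x := by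
        rcases hyend with h | h
        · have hh : y = z' := t.leaf_inj h
          rw [hh]
          exact hz'm
        · have hyw : y = w' := t.leaf_inj h
          have hw'z' : w' ∈ Nbr ε m z' := Or.inr (hsym' m z' w' hz'w')
          rw [hyw, hNbr_eq m z' x hz'm]
          exact hw'z'
      rcases hyNx with h | h
      · exact hxy h.symm
      · exact h (hsym x y ▸ hm)
    · rintro ⟨e, he, hme⟩
      by_contra hm
      simp only [Set.mem_setOf_eq] at hme
      exact FitchAux.not_reach_del_of_mem_edges t.acyc hp he (hme x y hm)
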